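/- Let p be a prime, let M, M̃ ∈ M_n(ℤ) be expanding matrices and D, D̃ ⊂ ℤ^n finite digit sets, and let A, B ∈ M_n(ℤ) have determinants not divisible by p with AB ≡ I (mod p), M̃ = AMB and D = B D̃. If Z_{D̃}^n ⊆ E̊_p^n, then M^t Z(m_D) ⊆ (1/det(AB)) (B^t)^{−1} M̃^t Z(m_{D̃}) and M̃^t Z(m_{D̃}) ⊆ B^t M^t Z(m_D). -/

import Mathlib

open MeasureTheory Matrix Set Complex
open scoped Real Pointwise ENNReal

noncomputable section

namespace SA

variable {n : ℕ}

/-- Cast an integer matrix to a real matrix. -/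
def toR (M : Matrix (Fin n) (Fin n) ℤ) : Matrix (Fin n) (Fin n) ℝ :=
  M.map (Int.cast : ℤ → ℝ)

/-- Cast an integer vector to a real vector. -/
def vecR (d : Fin n → ℤ) : Fin n → ℝ := fun i => (d i : ℝ)

/-- A real matrix is expanding if all of its complex eigenvalues have modulus > 1. -/
def IsExpandingR (M : Matrix (Fin n) (Fin n) ℝ) : Prop :=
  ∀ z : ℂ, (M.map (Complex.ofReal)).charpoly.IsRoot z → 1 < ‖z‖

/-- An integer matrix is expanding if all of its complex eigenvalues have modulus > 1. -/
def IsExpanding (M : Matrix (Fin n) (Fin n) ℤ) : Prop :=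
  IsExpandingR (toR M)

/-- Standard inner product on `ℝ^n`. -/
def dotR (x y : Fin n → ℝ) : ℝ := ∑ i, x i * y i

/-- The exponential function `e_λ(x) = e^{2πi⟨λ,x⟩}`. -/
def expFun (lam : Fin n → ℝ) : (Fin n → ℝ) → ℂ :=
  fun x => Complex.exp (2 * Real.pi * Complex.I * (dotR lam x))

/-- Mask polynomial of a finite real digit set. -/
def maskR (D : Finset (Fin n → ℝ)) (x : Fin n → ℝ) : ℂ :=
  (D.card : ℂ)⁻¹ * ∑ d ∈ D, Complex.exp (2 * Real.pi * Complex.I * (dotR d x))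

/-- Zero set of the mask polynomial of a real digit set. -/
def maskZR (D : Finset (Fin n → ℝ)) : Set (Fin n → ℝ) := {x | maskR D x = 0}

/-- Mask polynomial of a finite integer digit set. -/
def mask (D : Finset (Fin n → ℤ)) (x : Fin n → ℝ) : ℂ :=
  (D.card : ℂ)⁻¹ * ∑ d ∈ D, Complex.exp (2 * Real.pi * Complex.I * (dotR (vecR d) x))

/-- Zero set `Z(m_D)` of the mask polynomial of an integer digit set. -/
def maskZ (D : Finset (Fin n → ℤ)) : Set (Fin n → ℝ) := {x | mask D x = 0}

/-- `Z_D^n := Z(m_D) ∩ [0,1)^n`. -/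
def ZDn (D : Finset (Fin n → ℤ)) : Set (Fin n → ℝ) :=
  maskZ D ∩ {x | ∀ i, 0 ≤ x i ∧ x i < 1}

/-- `E̊_p^n := (1/p){(l₁,…,l_n) : 0 ≤ lᵢ ≤ p-1} \ {0}`. -/
def Ering (p n : ℕ) : Set (Fin n → ℝ) :=
  {x | (∃ l : Fin n → ℕ, (∀ i, l i ≤ p - 1) ∧ ∀ i, x i = (l i : ℝ) / p) ∧ x ≠ 0}

/-- The integer lattice `ℤ^n` inside `ℝ^n`. -/
def latticeZ (n : ℕ) : Set (Fin n → ℝ) := {x | ∀ i, ∃ k : ℤ, x i = (k : ℝ)}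

/-- `μ` is the self-affine measure generated by the real expanding matrix `M`
and the real digit set `D`: it is a Borel probability measure satisfying
`μ = (1/|D|) ∑_{d∈D} μ ∘ φ_d⁻¹` with `φ_d(x) = M⁻¹(x+d)`. -/
def IsSelfAffineR (M : Matrix (Fin n) (Fin n) ℝ) (D : Finset (Fin n → ℝ))
    (μ : Measure (Fin n → ℝ)) : Prop :=
  IsProbabilityMeasure μ ∧
    μ = (D.card : ℝ≥0∞)⁻¹ • ∑ d ∈ D, μ.map (fun x => M⁻¹.mulVec (x + d))

/-- `μ` is the self-affine measure generated by the integer expanding matrix `M`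
and the integer digit set `D`. -/
def IsSelfAffine (M : Matrix (Fin n) (Fin n) ℤ) (D : Finset (Fin n → ℤ))
    (μ : Measure (Fin n → ℝ)) : Prop :=
  IsProbabilityMeasure μ ∧
    μ = (D.card : ℝ≥0∞)⁻¹ • ∑ d ∈ D, μ.map (fun x => (toR M)⁻¹.mulVec (x + vecR d))

/-- Fourier transform `μ̂(ξ) = ∫ e^{2πi⟨x,ξ⟩} dμ(x)`. -/
def FT (μ : Measure (Fin n → ℝ)) (ξ : Fin n → ℝ) : ℂ :=
  ∫ x, Complex.exp (2 * Real.pi * Complex.I * (dotR x ξ)) ∂μ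

/-- The family of exponentials `E(Λ)` is mutually orthogonal in `L²(μ)`:
`μ̂(λ - λ') = 0` for all distinct `λ, λ' ∈ Λ`. -/
def OrthExp (μ : Measure (Fin n → ℝ)) (Λ : Set (Fin n → ℝ)) : Prop :=
  ∀ a ∈ Λ, ∀ b ∈ Λ, a ≠ b → FT μ (a - b) = 0

/-- `Λ` is a spectrum of `μ`: the exponentials `{e^{2πi⟨λ,x⟩} : λ ∈ Λ}` form an
orthonormal (Hilbert) basis of `L²(μ)`. -/
def IsSpectrum (μ : Measure (Fin n → ℝ)) (Λ : Set (Fin n → ℝ)) : Prop :=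
  ∃ b : HilbertBasis Λ ℂ (Lp ℂ 2 μ), ∀ l : Λ, (b l : Lp ℂ 2 μ) =ᵐ[μ] expFun (l : Fin n → ℝ)

/-- `μ` is a spectral measure. -/
def IsSpectralMeasure (μ : Measure (Fin n → ℝ)) : Prop :=
  ∃ Λ : Set (Fin n → ℝ), Λ.Countable ∧ IsSpectrum μ Λ

/-- `(M, D)` is admissible: there is `S ⊂ ℤ^n` with `|S| = |D|` such that
`H = (1/√|S|)[e^{2πi⟨M⁻¹d,s⟩}]_{d∈D,s∈S}` satisfies `H^*H = I`. -/
def Admissible (M : Matrix (Fin n) (Fin n) ℤ) (D : Finset (Fin n → ℤ)) : Prop :=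
  ∃ S : Finset (Fin n → ℤ), S.card = D.card ∧
    letI H : Matrix {d // d ∈ D} {s // s ∈ S} ℂ := fun d s =>
      ((1 : ℂ) / (Real.sqrt S.card : ℂ)) *
        Complex.exp (2 * Real.pi * Complex.I *
          (dotR ((toR M)⁻¹.mulVec (vecR (d : Fin n → ℤ))) (vecR (s : Fin n → ℤ))))
    Hᴴ * H = 1

/-- Two matrices are congruent entrywise modulo `p`. -/
def ModEq (p : ℕ) (A B : Matrix (Fin n) (Fin n) ℤ) : Prop :=
  ∀ i j, (p : ℤ) ∣ (A i j - B i j)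

/-- `(M, D)` and `(M̃, D̃)` are conjugate in `GL_n(p)`: there are integer matrices
`A, B` with determinants prime to `p`, `AB ≡ I (mod p)`, `M̃ = AMB`, and either
`D = B D̃` or `D̃ = A D`. -/
def ConjugateGL (p : ℕ) (M Mt : Matrix (Fin n) (Fin n) ℤ)
    (D Dt : Finset (Fin n → ℤ)) : Prop :=
  ∃ A B : Matrix (Fin n) (Fin n) ℤ,
    ¬ (p : ℤ) ∣ A.det ∧ ¬ (p : ℤ) ∣ B.det ∧ ModEq p (A * B) 1 ∧ Mt = A * M * B ∧
      ((∀ d, d ∈ D ↔ ∃ dt ∈ Dt, d = B.mulVec dt) ∨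
       (∀ dt, dt ∈ Dt ↔ ∃ d ∈ D, dt = A.mulVec d))



section Aux

lemma toR_mul (X Y : Matrix (Fin n) (Fin n) ℤ) : toR (X * Y) = toR X * toR Y := by
  ext i j
  simp only [toR, Matrix.map_apply, Matrix.mul_apply]
  push_cast
  rfl

lemma toR_transpose (X : Matrix (Fin n) (Fin n) ℤ) : toR (Xᵀ) = (toR X)ᵀ := rfl

lemma toR_det (X : Matrix (Fin n) (Fin n) ℤ) : (toR X).det = (X.det : ℝ) := by
  have := RingHom.map_det (Int.castRingHom ℝ) X
  exact this.symm

lemma vecR_mulVec (B : Matrix (Fin n) (Fin n) ℤ) (d : Fin n → ℤ) :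
    vecR (B.mulVec d) = (toR B).mulVec (vecR d) := by
  funext i
  simp only [vecR, toR, Matrix.mulVec, dotProduct, Matrix.map_apply]
  push_cast
  rfl

lemma dot_mulVec_left (B : Matrix (Fin n) (Fin n) ℝ) (v x : Fin n → ℝ) :
    dotR (B.mulVec v) x = dotR v (Bᵀ.mulVec x) := by
  show (B.mulVec v) ⬝ᵥ x = v ⬝ᵥ (Bᵀ.mulVec x)
  rw [Matrix.mulVec_transpose, dotProduct_comm (B.mulVec v) x,
    Matrix.dotProduct_mulVec, dotProduct_comm]

lemma mask_mulVec (B : Matrix (Fin n) (Fin n) ℤ) (hB : B.det ≠ 0)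
    (D Dt : Finset (Fin n → ℤ)) (hDeq : ∀ d, d ∈ D ↔ ∃ dt ∈ Dt, d = B.mulVec dt)
    (x : Fin n → ℝ) : mask D x = mask Dt ((toR B)ᵀ.mulVec x) := by
  have hdetR : (toR B).det ≠ 0 := by rw [toR_det]; exact_mod_cast hB
  have hinj : Function.Injective (B.mulVec : (Fin n → ℤ) → (Fin n → ℤ)) := by
    intro a b hab
    have h1 : (toR B).mulVec (vecR a) = (toR B).mulVec (vecR b) := by
      rw [← vecR_mulVec, ← vecR_mulVec, hab]
    have h2 : vecR a = vecR b := by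
      have hu : IsUnit (toR B) :=
        (Matrix.isUnit_iff_isUnit_det _).2 (isUnit_iff_ne_zero.2 hdetR)
      exact Matrix.mulVec_injective_iff_isUnit.2 hu h1
    funext i
    have h3 := congrFun h2 i
    simp only [vecR] at h3
    exact_mod_cast h3
  have hD : D = Dt.image B.mulVec := by
    ext d
    simp only [Finset.mem_image]
    rw [hDeq d]
    constructor
    · rintro ⟨dt, h1, h2⟩; exact ⟨dt, h1, h2.symm⟩
    · rintro ⟨dt, h1, h2⟩; exact ⟨dt, h1, h2.symm⟩
  have hcard : D.card = Dt.card := by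
    rw [hD, Finset.card_image_of_injective _ hinj]
  unfold mask
  rw [hcard, hD, Finset.sum_image (fun a _ b _ h => hinj h)]
  congr 1
  apply Finset.sum_congr rfl
  intro dt _
  rw [vecR_mulVec, dot_mulVec_left]

lemma mask_add_int (D : Finset (Fin n → ℤ)) (y : Fin n → ℝ) (k : Fin n → ℤ) :
    mask D (y + vecR k) = mask D y := by
  unfold mask
  congr 1
  apply Finset.sum_congr rfl
  intro d _
  have hdot : dotR (vecR d) (y + vecR k) = dotR (vecR d) y + ((∑ i, d i * k i : ℤ) : ℝ) := by
    simp only [dotR, vecR, Pi.add_apply]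
    push_cast
    rw [← Finset.sum_add_distrib]
    apply Finset.sum_congr rfl
    intro i _
    ring
  rw [hdot, Complex.ofReal_add, mul_add, Complex.exp_add]
  have h1 : ((2 : ℂ) * (Real.pi : ℂ) * Complex.I * ((((∑ i, d i * k i : ℤ) : ℝ)) : ℂ)) =
      ((∑ i, d i * k i : ℤ) : ℂ) * (2 * (Real.pi : ℂ) * Complex.I) := by push_cast; ring
  rw [h1, Complex.exp_int_mul_two_pi_mul_I, mul_one]

lemma maskZ_pdiv {p : ℕ} (hp : 0 < p) (Dt : Finset (Fin n → ℤ))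
    (hZ : ZDn Dt ⊆ Ering p n) {y : Fin n → ℝ} (hy : y ∈ maskZ Dt) :
    ∀ i, ∃ m : ℤ, y i = (m : ℝ) / p := by
  have hzmask : (fun i => Int.fract (y i)) ∈ maskZ Dt := by
    show mask Dt (fun i => Int.fract (y i)) = 0
    have hyz : (fun i => Int.fract (y i)) = y + vecR (fun i => -⌊y i⌋) := by
      funext i; simp [Int.fract, vecR, sub_eq_add_neg]
    rw [hyz, mask_add_int]
    exact hy
  have hzE : (fun i => Int.fract (y i)) ∈ Ering p n :=
    hZ ⟨hzmask, fun i => ⟨Int.fract_nonneg _, Int.fract_lt_one _⟩⟩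
  obtain ⟨⟨l, -, hl⟩, -⟩ := hzE
  intro i
  have hp' : (p : ℝ) ≠ 0 := by positivity
  refine ⟨(l i : ℤ) + p * ⌊y i⌋, ?_⟩
  have h1 : Int.fract (y i) = (l i : ℝ) / p := hl i
  have h3 : (((l i : ℤ) + (p : ℤ) * ⌊y i⌋ : ℤ) : ℝ) / p = (l i : ℝ) / p + (⌊y i⌋ : ℝ) := by
    push_cast
    field_simp
  rw [h3, ← h1]
  exact (Int.fract_add_floor (y i)).symm

lemma modeq_one_mulVec {p : ℕ} (hp : (p : ℝ) ≠ 0) (E : Matrix (Fin n) (Fin n) ℤ)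
    (hE : ModEq p E 1) {y : Fin n → ℝ} (hy : ∀ i, ∃ m : ℤ, y i = (m : ℝ) / p) :
    ∃ k : Fin n → ℤ, (toR E).mulVec y = y + vecR k := by
  choose m hm using hy
  choose c hc using fun i j => hE i j
  refine ⟨fun i => ∑ j, c i j * m j, ?_⟩
  funext i
  simp only [Matrix.mulVec, dotProduct, toR, Matrix.map_apply, Pi.add_apply, vecR]
  have hEij : ∀ j, ((E i j : ℤ) : ℝ) = (((1 : Matrix (Fin n) (Fin n) ℤ) i j : ℤ) : ℝ)
      + (p : ℝ) * ((c i j : ℤ) : ℝ) := by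
    intro j
    have := hc i j
    have h2 : E i j = (1 : Matrix (Fin n) (Fin n) ℤ) i j + (p : ℤ) * c i j := by linarith
    rw [h2]; push_cast; ring
  have hsum : ∀ j, ((E i j : ℤ) : ℝ) * y j
      = (if i = j then (1:ℝ) else 0) * ((m j : ℝ) / p) + ((c i j : ℤ) : ℝ) * (m j : ℝ) := by
    intro j
    rw [hEij j, hm j, add_mul]
    have h1 : (((1 : Matrix (Fin n) (Fin n) ℤ) i j : ℤ) : ℝ) = if i = j then (1:ℝ) else 0 := by
      by_cases h : i = j <;> simp [Matrix.one_apply, h]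
    rw [h1]
    congr 1
    field_simp
  calc ∑ j, ((E i j : ℤ) : ℝ) * y j
      = ∑ j, ((if i = j then (1:ℝ) else 0) * ((m j : ℝ) / p)
          + ((c i j : ℤ) : ℝ) * (m j : ℝ)) := Finset.sum_congr rfl (fun j _ => hsum j)
    _ = y i + (((∑ j, c i j * m j : ℤ) : ℝ)) := by
        rw [Finset.sum_add_distrib]
        congr 1
        · have h4 : ∑ j, (if i = j then (1:ℝ) else 0) * ((m j : ℝ) / p)
              = (m i : ℝ) / p := by simp
          rw [h4, ← hm i]
        · push_cast
          rfl

lemma modeq_refl_map {p : ℕ} [NeZero p] {X Y : Matrix (Fin n) (Fin n) ℤ}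
    (h : ModEq p X Y) : X.map (Int.cast : ℤ → ZMod p) = Y.map Int.cast := by
  ext i j
  simp only [Matrix.map_apply]
  have h0 := (ZMod.intCast_zmod_eq_zero_iff_dvd (X i j - Y i j) p).2 (h i j)
  push_cast at h0
  exact sub_eq_zero.mp h0

lemma modeq_of_map {p : ℕ} [NeZero p] {X Y : Matrix (Fin n) (Fin n) ℤ}
    (h : X.map (Int.cast : ℤ → ZMod p) = Y.map Int.cast) : ModEq p X Y := by
  intro i j
  rw [← ZMod.intCast_zmod_eq_zero_iff_dvd]
  push_cast
  rw [sub_eq_zero]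
  have := congrFun (congrFun h i) j
  simpa [Matrix.map_apply] using this

lemma modeq_transpose {p : ℕ} {X : Matrix (Fin n) (Fin n) ℤ}
    (h : ModEq p X 1) : ModEq p Xᵀ 1 := by
  intro i j
  have := h j i
  simpa [Matrix.one_apply, Matrix.transpose_apply, eq_comm] using this

lemma modeq_adjugate {p : ℕ} [NeZero p] {X : Matrix (Fin n) (Fin n) ℤ}
    (h : ModEq p X 1) : ModEq p X.adjugate 1 := by
  apply modeq_of_map
  have hm : X.map (Int.cast : ℤ → ZMod p) = 1 := by
    rw [modeq_refl_map h]
    have : ((1 : Matrix (Fin n) (Fin n) ℤ).map (Int.cast : ℤ → ZMod p))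
        = (Int.castRingHom (ZMod p)).mapMatrix (1 : Matrix (Fin n) (Fin n) ℤ) := rfl
    rw [this, _root_.map_one]
  have hadj := RingHom.map_adjugate (Int.castRingHom (ZMod p)) X
  have h1 : X.adjugate.map (Int.cast : ℤ → ZMod p)
      = Matrix.adjugate (X.map (Int.cast : ℤ → ZMod p)) := hadj
  rw [h1, hm, Matrix.adjugate_one]
  have : ((1 : Matrix (Fin n) (Fin n) ℤ).map (Int.cast : ℤ → ZMod p))
      = (Int.castRingHom (ZMod p)).mapMatrix (1 : Matrix (Fin n) (Fin n) ℤ) := rfl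
  rw [this, _root_.map_one]

lemma sandwich (Q P : Matrix (Fin n) (Fin n) ℝ) (hQ : Q⁻¹ * Q = 1) :
    P * (Q * P).adjugate * Q = (Q * P).det • 1 := by
  have h2 : ∀ X : Matrix (Fin n) (Fin n) ℝ, Q⁻¹ * (Q * X) = X := by
    intro X
    rw [← Matrix.mul_assoc, hQ, Matrix.one_mul]
  have h1 : Q * (P * (Q * P).adjugate * Q) = Q * ((Q * P).det • 1) := by
    rw [← Matrix.mul_assoc, ← Matrix.mul_assoc, Matrix.mul_adjugate, Matrix.smul_mul,
      Matrix.one_mul, Matrix.mul_smul, Matrix.mul_one]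
  calc P * (Q * P).adjugate * Q = Q⁻¹ * (Q * (P * (Q * P).adjugate * Q)) := (h2 _).symm
    _ = Q⁻¹ * (Q * ((Q * P).det • 1)) := by rw [h1]
    _ = (Q * P).det • 1 := h2 _

end Aux

/-- `M^t Z(m_D) ⊆ (1/det(AB)) (B^t)⁻¹ M̃^t Z(m_{D̃})` and
`M̃^t Z(m_{D̃}) ⊆ B^t M^t Z(m_D)`. -/
theorem maskZ_one_subset {n : ℕ} {p : ℕ} (hp : p.Prime)
    (M Mt : Matrix (Fin n) (Fin n) ℤ) (hM : IsExpanding M) (hMt : IsExpanding Mt)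
    (D Dt : Finset (Fin n → ℤ)) (A B : Matrix (Fin n) (Fin n) ℤ)
    (hA : ¬ (p : ℤ) ∣ A.det) (hB : ¬ (p : ℤ) ∣ B.det)
    (hAB : ModEq p (A * B) 1) (hMteq : Mt = A * M * B)
    (hDeq : ∀ d, d ∈ D ↔ ∃ dt ∈ Dt, d = B.mulVec dt)
    (hZ : ZDn Dt ⊆ Ering p n) :
    (∀ x ∈ maskZ D, ∃ y ∈ maskZ Dt,
        (toR M)ᵀ.mulVec x =
          (((A * B).det : ℤ) : ℝ)⁻¹ • ((toR B)ᵀ)⁻¹.mulVec ((toR Mt)ᵀ.mulVec y)) ∧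
      (∀ y ∈ maskZ Dt, ∃ x ∈ maskZ D,
        (toR Mt)ᵀ.mulVec y = (toR B)ᵀ.mulVec ((toR M)ᵀ.mulVec x)) := by
  haveI : NeZero p := ⟨hp.pos.ne'⟩
  have hpR : (p : ℝ) ≠ 0 := by
    have := hp.pos
    positivity
  have hdA : A.det ≠ 0 := fun h => hA (h ▸ dvd_zero _)
  have hdB : B.det ≠ 0 := fun h => hB (h ▸ dvd_zero _)
  set BR := (toR B)ᵀ with hBRdef
  set AR := (toR A)ᵀ with hARdef
  set MR := (toR M)ᵀ with hMRdef
  have hdBR : BR.det ≠ 0 := by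
    rw [hBRdef, Matrix.det_transpose, toR_det]
    exact_mod_cast hdB
  have hBinv : BR⁻¹ * BR = 1 := Matrix.nonsing_inv_mul _ (isUnit_iff_ne_zero.2 hdBR)
  have hMtR : (toR Mt)ᵀ = BR * (MR * AR) := by
    rw [hMteq, toR_mul, toR_mul, Matrix.transpose_mul, Matrix.transpose_mul]
  have hBA : toR ((A * B)ᵀ) = BR * AR := by
    rw [toR_transpose, toR_mul, Matrix.transpose_mul]
  have hdR : (((A * B).det : ℤ) : ℝ) ≠ 0 := by
    rw [Matrix.det_mul]
    exact_mod_cast mul_ne_zero hdA hdB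
  constructor
  · intro x hx
    have hyt : (BR.mulVec x) ∈ maskZ Dt := by
      show mask Dt (BR.mulVec x) = 0
      rw [← mask_mulVec B hdB D Dt hDeq x]
      exact hx
    have hyp := maskZ_pdiv hp.pos Dt hZ hyt
    have hadjmod : ModEq p ((A * B)ᵀ).adjugate 1 := modeq_adjugate (modeq_transpose hAB)
    obtain ⟨k, hk⟩ := modeq_one_mulVec hpR _ hadjmod hyp
    refine ⟨(toR ((A * B)ᵀ).adjugate).mulVec (BR.mulVec x), ?_, ?_⟩
    · show mask Dt _ = 0
      rw [hk, mask_add_int]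
      exact hyt
    · have hNR : toR ((A * B)ᵀ).adjugate = (BR * AR).adjugate := by
        have h5 := RingHom.map_adjugate (Int.castRingHom ℝ) ((A * B)ᵀ)
        have h6 : (Int.castRingHom ℝ).mapMatrix ((A * B)ᵀ) = BR * AR := hBA
        have h7 : toR ((A * B)ᵀ).adjugate
            = (Int.castRingHom ℝ).mapMatrix ((A * B)ᵀ).adjugate := rfl
        rw [h7, h5, h6]
      have hdet : (BR * AR).det = (((A * B).det : ℤ) : ℝ) := by
        rw [Matrix.det_mul, hBRdef, hARdef, Matrix.det_transpose, Matrix.det_transpose,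
          toR_det, toR_det, Matrix.det_mul]
        push_cast
        ring
      have hkey : AR * toR ((A * B)ᵀ).adjugate * BR = (((A * B).det : ℤ) : ℝ) • 1 := by
        rw [hNR, sandwich BR AR hBinv, hdet]
      have e1 : AR.mulVec ((toR ((A * B)ᵀ).adjugate).mulVec (BR.mulVec x))
          = (((A * B).det : ℤ) : ℝ) • x := by
        rw [Matrix.mulVec_mulVec, Matrix.mulVec_mulVec, hkey, Matrix.smul_mulVec,
          Matrix.one_mulVec]
      rw [hMtR, Matrix.mulVec_mulVec, ← Matrix.mul_assoc, hBinv, Matrix.one_mul,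
        ← Matrix.mulVec_mulVec, e1, Matrix.mulVec_smul, smul_smul,
        inv_mul_cancel₀ hdR, one_smul]
  · intro y hy
    have hyp := maskZ_pdiv hp.pos Dt hZ hy
    obtain ⟨k, hk⟩ := modeq_one_mulVec hpR _ (modeq_transpose hAB) hyp
    refine ⟨AR.mulVec y, ?_, ?_⟩
    · show mask D (AR.mulVec y) = 0
      rw [mask_mulVec B hdB D Dt hDeq]
      have h8 : BR.mulVec (AR.mulVec y) = (toR ((A * B)ᵀ)).mulVec y := by
        rw [Matrix.mulVec_mulVec, hBA]
      rw [h8, hk, mask_add_int]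
      exact hy
    · rw [hMtR, ← Matrix.mulVec_mulVec, ← Matrix.mulVec_mulVec]

end SA
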